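/- For every integer k ≥ 4, the diamond graph on vertex set {b, v1, v2, v3} with unique non-edge v1 v3 admits a k-leaf root T such that m_T(b) = k−1 (in particular the minimum tree-distance from b to the other three leaves is attained and equals k−1). -/

import Mathlib

open SimpleGraph

/-- A vertex of a graph is a leaf if it has exactly one neighbor. -/
def IsLeafVert {W : Type} (T : SimpleGraph W) (w : W) : Prop := ∃! u, T.Adj w u

/-- `T` (a finite tree on vertex type `W`) together with the injection `f` of the
vertices of `G` onto the leaves of `T` is a `k`-leaf root of `G`:  the leaves of `T`
are exactly the image of `f`, and two distinct vertices of `G` are adjacent iff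
their distance in `T` is at most `k`. -/
def IsLeafRoot {V W : Type} (G : SimpleGraph V) (k : ℕ)
    (T : SimpleGraph W) (f : V → W) : Prop :=
  Finite W ∧ T.IsTree ∧ Function.Injective f ∧
    (∀ w : W, (∃ v, f v = w) ↔ IsLeafVert T w) ∧
    (∀ u v : V, u ≠ v → (G.Adj u v ↔ T.dist (f u) (f v) ≤ k))

/-- `G` is a `k`-leaf power: it admits a `k`-leaf root. -/
def IsKLeafPower {V : Type} (G : SimpleGraph V) (k : ℕ) : Prop :=
  ∃ (W : Type) (T : SimpleGraph W) (f : V → W), IsLeafRoot G k T f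

/-- `m_T(v)`: the minimum over all `u ≠ v` of the distance in the leaf root `T`
between the leaves corresponding to `u` and `v`. -/
noncomputable def mval {V W : Type} (T : SimpleGraph W) (f : V → W) (v : V) : ℕ :=
  sInf {d | ∃ u, u ≠ v ∧ T.dist (f u) (f v) = d}

/-- A vertex has degree at least three. -/
def HasDegreeGEThree {W : Type} (T : SimpleGraph W) (w : W) : Prop :=
  ∃ a b c : W, a ≠ b ∧ a ≠ c ∧ b ≠ c ∧ T.Adj w a ∧ T.Adj w b ∧ T.Adj w c

/-- A spine of a tree: a path containing every vertex of degree at least 3.  A tree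
having a spine is exactly a caterpillar subdivision. -/
def IsSpine {W : Type} (T : SimpleGraph W) {a b : W} (p : T.Walk a b) : Prop :=
  p.IsPath ∧ ∀ w : W, HasDegreeGEThree T w → w ∈ p.support

/-- A linear `k`-leaf root: a `k`-leaf root whose tree is a caterpillar subdivision. -/
def IsLinearLeafRoot {V W : Type} (G : SimpleGraph V) (k : ℕ)
    (T : SimpleGraph W) (f : V → W) : Prop :=
  IsLeafRoot G k T f ∧ ∃ (a b : W) (p : T.Walk a b), IsSpine T p

/-- `G` is a linear `k`-leaf power: it admits a linear `k`-leaf root. -/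
def IsLinearKLeafPower {V : Type} (G : SimpleGraph V) (k : ℕ) : Prop :=
  ∃ (W : Type) (T : SimpleGraph W) (f : V → W), IsLinearLeafRoot G k T f

/-- A cycle of length `n` in `G`, given as an injective map from `ZMod n` with
consecutive images adjacent. -/
def IsCycleIn {V : Type} (G : SimpleGraph V) (n : ℕ) (f : ZMod n → V) : Prop :=
  Function.Injective f ∧ ∀ i : ZMod n, G.Adj (f i) (f (i + 1))

/-- `G` is chordal: every cycle of length at least 4 has a chord. -/
def Chordal {V : Type} (G : SimpleGraph V) : Prop :=
  ∀ n : ℕ, 4 ≤ n → ∀ f : ZMod n → V, IsCycleIn G n f →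
    ∃ i j : ZMod n, j ≠ i ∧ j ≠ i + 1 ∧ j ≠ i - 1 ∧ G.Adj (f i) (f j)

/-- `G` is strongly chordal: chordal, and every even cycle of length at least 6 has
an odd chord (a chord joining two vertices an odd distance apart along the cycle). -/
def StronglyChordal {V : Type} (G : SimpleGraph V) : Prop :=
  Chordal G ∧ ∀ n : ℕ, 6 ≤ n → Even n → ∀ f : ZMod n → V, IsCycleIn G n f →
    ∃ i j : ZMod n, Odd ((j - i).val) ∧ j ≠ i + 1 ∧ j ≠ i - 1 ∧ G.Adj (f i) (f j)

/-- The diamond: the complete graph on `{b, v1, v2, v3} = {0, 1, 2, 3}` minus the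
single edge `v1 v3 = {1, 3}`. -/
def diamond : SimpleGraph (Fin 4) :=
  SimpleGraph.fromRel (fun a _ => a = 0 ∨ a = 2)

namespace DLR

def tk (k : ℕ) : ℕ := (k-1)/2
def ck (k : ℕ) : ℕ := k - tk k
def InW (k : ℕ) (x y : ℤ) : Prop :=
  (y = 0 ∧ 0 ≤ x ∧ x ≤ (k:ℤ)+1) ∨ (x = 2 ∧ y = -1) ∨
  (x = (ck k : ℤ) ∧ 1 ≤ y ∧ y ≤ (tk k : ℤ))
def Wt (k : ℕ) := {p : ℤ × ℤ // InW k p.1 p.2}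
def Tg (k : ℕ) : SimpleGraph (Wt k) where
  Adj u v := (u.1.1 - v.1.1).natAbs + (u.1.2 - v.1.2).natAbs = 1
  symm := ⟨by intro u v h; omega⟩
  loopless := ⟨by intro u h; omega⟩
lemma adj_mk {k : ℕ} {x1 y1 x2 y2 : ℤ} (h1 : InW k x1 y1) (h2 : InW k x2 y2)
    (h : (x1 - x2).natAbs + (y1 - y2).natAbs = 1) :
    (Tg k).Adj ⟨(x1,y1),h1⟩ ⟨(x2,y2),h2⟩ := h
lemma adj_coords {k : ℕ} {u v : Wt k} (h : (Tg k).Adj u v) :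
    (u.1.1 - v.1.1).natAbs + (u.1.2 - v.1.2).natAbs = 1 := h
lemma wext {k : ℕ} {u v : Wt k} (h1 : u.1.1 = v.1.1) (h2 : u.1.2 = v.1.2) : u = v :=
  Subtype.ext (Prod.ext h1 h2)
lemma horiz0 {k : ℕ} {u v : Wt k} (hy : u.1.2 = v.1.2) (hx : u.1.1 ≠ v.1.1) :
    u.1.2 = 0 := by
  have hu := u.2; have hv := v.2
  unfold InW ck tk at hu hv
  omega

def root (k : ℕ) : Wt k := ⟨(0,0), by unfold InW; omega⟩

lemma reach_root (k : ℕ) (hk : 1 ≤ k) : ∀ (n : ℕ) (v : Wt k),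
    v.1.1.toNat + v.1.2.natAbs ≤ n → (Tg k).Reachable v (root k) := by
  intro n
  induction n with
  | zero =>
    intro v hv
    have hm := v.2; unfold InW ck tk at hm
    have h1 : v.1.1 = 0 := by omega
    have h2 : v.1.2 = 0 := by omega
    rw [wext (v := root k) h1 h2]
  | succ n ih =>
    intro v hv
    have hm := v.2
    by_cases h0 : v.1.1 = 0 ∧ v.1.2 = 0
    · rw [wext (v := root k) h0.1 h0.2]
    · obtain ⟨x, y, hxy, hpar, hdec⟩ :
          ∃ x y : ℤ, InW k x y ∧ (v.1.1 - x).natAbs + (v.1.2 - y).natAbs = 1 ∧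
            x.toNat + y.natAbs ≤ n := by
        unfold InW ck tk at hm ⊢
        rcases hm with ⟨hy, hx0, hx1⟩ | ⟨hx, hy⟩ | ⟨hx, hy1, hy2⟩
        · exact ⟨v.1.1 - 1, 0, by omega, by omega, by omega⟩
        · exact ⟨2, 0, by omega, by omega, by omega⟩
        · exact ⟨v.1.1, v.1.2 - 1, by omega, by omega, by omega⟩
      have hadj : (Tg k).Adj v ⟨(x,y), hxy⟩ := hpar
      exact hadj.reachable.trans (ih _ hdec)

lemma conn (k : ℕ) (hk : 1 ≤ k) : (Tg k).Connected := by
  have h : ∀ v : Wt k, (Tg k).Reachable v (root k) :=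
    fun v => reach_root k hk _ v le_rfl
  rw [SimpleGraph.connected_iff]
  exact ⟨fun u v => (h u).trans (h v).symm, ⟨root k⟩⟩

lemma cross_mem {W : Type} {T : SimpleGraph W} {a b : W} (σ : W → Prop)
    (hcross : ∀ x y, T.Adj x y → ¬(σ x ↔ σ y) → s(x, y) = s(a, b)) :
    ∀ {u v : W} (p : T.Walk u v), ¬(σ u ↔ σ v) → s(a, b) ∈ p.edges := by
  intro u v p
  induction p with
  | nil => intro h; exact absurd Iff.rfl h
  | @cons u x v h q ih =>
    intro hne
    by_cases hσ : σ u ↔ σ x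
    · exact List.mem_cons_of_mem _ (ih fun h2 => hne (hσ.trans h2))
    · rw [SimpleGraph.Walk.edges_cons, ← hcross _ _ h hσ]
      exact List.mem_cons_self

lemma acyclic (k : ℕ) (hk : 4 ≤ k) : (Tg k).IsAcyclic := by
  rw [SimpleGraph.isAcyclic_iff_forall_adj_isBridge]
  intro v w hadj
  rw [SimpleGraph.isBridge_iff_adj_and_forall_walk_mem_edges]
  refine fun p => ?_
  have hvw := adj_coords hadj
  by_cases hyy : v.1.2 = w.1.2
  · -- horizontal edge
    have hvwx : v.1.1 ≠ w.1.1 := by omega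
    have hv0 : v.1.2 = 0 := horiz0 hyy hvwx
    obtain ⟨m, hm⟩ : ∃ m : ℤ,
        (m = v.1.1 ∧ v.1.1 + 1 = w.1.1) ∨ (m = w.1.1 ∧ w.1.1 + 1 = v.1.1) :=
      ⟨min v.1.1 w.1.1, by omega⟩
    apply cross_mem (fun q => m + 1 ≤ q.1.1) ?_ p ?_
    · intro x y hxy hne
      have hxy' := adj_coords hxy
      have hne' : (m + 1 ≤ x.1.1 ∧ ¬ (m + 1 ≤ y.1.1)) ∨
          (¬ (m + 1 ≤ x.1.1) ∧ m + 1 ≤ y.1.1) := by tauto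
      have hxyne : x.1.1 ≠ y.1.1 := by omega
      have hxy2 : x.1.2 = y.1.2 := by omega
      have hx0 : x.1.2 = 0 := horiz0 hxy2 hxyne
      have key : (x.1.1 = v.1.1 ∧ x.1.2 = v.1.2 ∧ y.1.1 = w.1.1 ∧ y.1.2 = w.1.2)
               ∨ (x.1.1 = w.1.1 ∧ x.1.2 = w.1.2 ∧ y.1.1 = v.1.1 ∧ y.1.2 = v.1.2) := by
        omega
      rcases key with ⟨e1,e2,e3,e4⟩|⟨e1,e2,e3,e4⟩
      · rw [wext e1 e2, wext e3 e4]
      · rw [wext e1 e2, wext e3 e4, Sym2.eq_swap]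
    · rcases hm with ⟨rfl, h⟩|⟨rfl, h⟩
      · exact fun hiff => absurd (hiff.mpr (by omega)) (by omega)
      · exact fun hiff => absurd (hiff.mp (by omega)) (by omega)
  · -- vertical edge
    have hxx : v.1.1 = w.1.1 := by omega
    obtain ⟨m, hm⟩ : ∃ m : ℤ,
        (m = v.1.2 ∧ v.1.2 + 1 = w.1.2) ∨ (m = w.1.2 ∧ w.1.2 + 1 = v.1.2) :=
      ⟨min v.1.2 w.1.2, by omega⟩
    rcases le_or_gt 0 m with hsgn | hsgn
    · apply cross_mem (fun q => q.1.1 = v.1.1 ∧ m + 1 ≤ q.1.2) ?_ p ?_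
      · intro x y hxy hne
        have hxy' := adj_coords hxy
        have hne' : ((x.1.1 = v.1.1 ∧ m + 1 ≤ x.1.2) ∧ ¬ (y.1.1 = v.1.1 ∧ m + 1 ≤ y.1.2)) ∨
            (¬ (x.1.1 = v.1.1 ∧ m + 1 ≤ x.1.2) ∧ (y.1.1 = v.1.1 ∧ m + 1 ≤ y.1.2)) := by
          tauto
        by_cases hxyne : x.1.1 = y.1.1
        · have key : (x.1.1 = v.1.1 ∧ x.1.2 = v.1.2 ∧ y.1.1 = w.1.1 ∧ y.1.2 = w.1.2)
                   ∨ (x.1.1 = w.1.1 ∧ x.1.2 = w.1.2 ∧ y.1.1 = v.1.1 ∧ y.1.2 = v.1.2) := by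
            omega
          rcases key with ⟨e1,e2,e3,e4⟩|⟨e1,e2,e3,e4⟩
          · rw [wext e1 e2, wext e3 e4]
          · rw [wext e1 e2, wext e3 e4, Sym2.eq_swap]
        · have hxy2 : x.1.2 = y.1.2 := by omega
          have hx0 : x.1.2 = 0 := horiz0 hxy2 hxyne
          exact False.elim (by omega)
      · rcases hm with ⟨rfl, h⟩|⟨rfl, h⟩
        · exact fun hiff => absurd (hiff.mpr (by omega)) (by omega)
        · exact fun hiff => absurd (hiff.mp (by omega)) (by omega)
    · apply cross_mem (fun q => q.1.1 = v.1.1 ∧ q.1.2 ≤ m) ?_ p ?_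
      · intro x y hxy hne
        have hxy' := adj_coords hxy
        have hne' : ((x.1.1 = v.1.1 ∧ x.1.2 ≤ m) ∧ ¬ (y.1.1 = v.1.1 ∧ y.1.2 ≤ m)) ∨
            (¬ (x.1.1 = v.1.1 ∧ x.1.2 ≤ m) ∧ (y.1.1 = v.1.1 ∧ y.1.2 ≤ m)) := by
          tauto
        by_cases hxyne : x.1.1 = y.1.1
        · have key : (x.1.1 = v.1.1 ∧ x.1.2 = v.1.2 ∧ y.1.1 = w.1.1 ∧ y.1.2 = w.1.2)
                   ∨ (x.1.1 = w.1.1 ∧ x.1.2 = w.1.2 ∧ y.1.1 = v.1.1 ∧ y.1.2 = v.1.2) := by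
            omega
          rcases key with ⟨e1,e2,e3,e4⟩|⟨e1,e2,e3,e4⟩
          · rw [wext e1 e2, wext e3 e4]
          · rw [wext e1 e2, wext e3 e4, Sym2.eq_swap]
        · have hxy2 : x.1.2 = y.1.2 := by omega
          have hx0 : x.1.2 = 0 := horiz0 hxy2 hxyne
          exact False.elim (by omega)
      · rcases hm with ⟨rfl, h⟩|⟨rfl, h⟩
        · exact fun hiff => absurd (hiff.mp (by omega)) (by omega)
        · exact fun hiff => absurd (hiff.mpr (by omega)) (by omega)

def pB (k : ℕ) : Wt k := ⟨((ck k : ℤ), (tk k : ℤ)), by unfold InW ck tk; omega⟩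
def p1 (k : ℕ) : Wt k := ⟨(0,0), by unfold InW; omega⟩
def p2 (k : ℕ) : Wt k := ⟨(2,-1), by unfold InW; omega⟩
def p3 (k : ℕ) : Wt k := ⟨((k:ℤ)+1, 0), by unfold InW; omega⟩
def fL (k : ℕ) : Fin 4 → Wt k := ![pB k, p1 k, p2 k, p3 k]

lemma pB_x (k : ℕ) : (pB k).1.1 = (ck k : ℤ) := rfl
lemma pB_y (k : ℕ) : (pB k).1.2 = (tk k : ℤ) := rfl
lemma p1_x (k : ℕ) : (p1 k).1.1 = 0 := rfl
lemma p1_y (k : ℕ) : (p1 k).1.2 = 0 := rfl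
lemma p2_x (k : ℕ) : (p2 k).1.1 = 2 := rfl
lemma p2_y (k : ℕ) : (p2 k).1.2 = -1 := rfl
lemma p3_x (k : ℕ) : (p3 k).1.1 = (k:ℤ)+1 := rfl
lemma p3_y (k : ℕ) : (p3 k).1.2 = 0 := rfl
lemma fL0 (k : ℕ) : fL k 0 = pB k := rfl
lemma fL1 (k : ℕ) : fL k 1 = p1 k := rfl
lemma fL2 (k : ℕ) : fL k 2 = p2 k := rfl
lemma fL3 (k : ℕ) : fL k 3 = p3 k := rfl

lemma distspine (k : ℕ) (hk : 1 ≤ k) : ∀ (d : ℕ) (a b : ℤ) (ha : InW k a 0) (hb : InW k b 0),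
    a ≤ b → b - a = d → (Tg k).dist ⟨(a,0),ha⟩ ⟨(b,0),hb⟩ ≤ d := by
  intro d
  induction d with
  | zero =>
    intro a b ha hb hab h0
    have hab' : a = b := by omega
    subst hab'
    have he : (⟨(a,0),ha⟩ : Wt k) = ⟨(a,0),hb⟩ := rfl
    rw [he]
    exact SimpleGraph.dist_self.le
  | succ d ih =>
    intro a b ha hb hab hd
    have ha' : 0 ≤ a := by unfold InW at ha; omega
    have hb2 : b ≤ (k:ℤ)+1 := by unfold InW at hb; omega
    have hb' : InW k (b-1) 0 := by unfold InW; omega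
    have htr := (conn k hk).dist_triangle (u := (⟨(a,0),ha⟩ : Wt k))
      (v := ⟨(b-1,0),hb'⟩) (w := ⟨(b,0),hb⟩)
    have h1 : (Tg k).dist ⟨(b-1,0),hb'⟩ ⟨(b,0),hb⟩ = 1 :=
      SimpleGraph.dist_eq_one_iff_adj.mpr (adj_mk _ _ (by omega))
    have h2 := ih a (b-1) ha hb' (by omega) (by omega)
    exact htr.trans (Nat.add_le_add h2 h1.le)

lemma distvert (k : ℕ) (hk : 1 ≤ k) : ∀ (d : ℕ) (y1 y2 : ℤ) (h1 : InW k (ck k) y1)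
    (h2 : InW k (ck k) y2), 0 ≤ y1 → y1 ≤ y2 → y2 - y1 = d →
    (Tg k).dist ⟨((ck k : ℤ), y1),h1⟩ ⟨((ck k : ℤ), y2),h2⟩ ≤ d := by
  intro d
  induction d with
  | zero =>
    intro y1 y2 h1 h2 hy1 hy12 h0
    have hy' : y1 = y2 := by omega
    subst hy'
    have he : (⟨((ck k : ℤ),y1),h1⟩ : Wt k) = ⟨((ck k : ℤ),y1),h2⟩ := rfl
    rw [he]
    exact SimpleGraph.dist_self.le
  | succ d ih =>
    intro y1 y2 h1 h2 hy1 hy12 hd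
    have hckk : (ck k : ℤ) ≤ (k:ℤ) := by unfold ck tk; push_cast; omega
    have hy2' : y2 ≤ (tk k : ℤ) := by unfold InW at h2; omega
    have h2' : InW k (ck k) (y2 - 1) := by unfold InW; omega
    have htr := (conn k hk).dist_triangle (u := (⟨((ck k : ℤ),y1),h1⟩ : Wt k))
      (v := ⟨((ck k : ℤ),y2-1),h2'⟩) (w := ⟨((ck k : ℤ),y2),h2⟩)
    have he : (Tg k).dist ⟨((ck k : ℤ),y2-1),h2'⟩ ⟨((ck k : ℤ),y2),h2⟩ = 1 :=
      SimpleGraph.dist_eq_one_iff_adj.mpr (adj_mk _ _ (by omega))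
    have h3 := ih y1 (y2-1) h1 h2' (by omega) (by omega) (by omega)
    exact htr.trans (Nat.add_le_add h3 he.le)

lemma lip {k : ℕ} (φ : Wt k → ℤ) (hφ : ∀ x y : Wt k, (Tg k).Adj x y → φ x - φ y ≤ 1) :
    ∀ {u v : Wt k} (p : (Tg k).Walk u v), φ u - φ v ≤ p.length := by
  intro u v p
  induction p with
  | nil => simp
  | @cons u x v h q ih =>
    have h1 := hφ u x h
    rw [SimpleGraph.Walk.length_cons]
    push_cast
    omega

lemma dist_lb {k : ℕ} (hk : 1 ≤ k) (φ : Wt k → ℤ)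
    (hφ : ∀ x y : Wt k, (Tg k).Adj x y → φ x - φ y ≤ 1) (u v : Wt k) :
    φ u - φ v ≤ ((Tg k).dist u v : ℤ) := by
  obtain ⟨p, hp⟩ := (conn k hk).exists_walk_length_eq_dist u v
  have := lip φ hφ p
  omega

lemma finW (k : ℕ) : Finite (Wt k) := by
  have h : {p : ℤ × ℤ | InW k p.1 p.2}.Finite := by
    apply (Set.finite_Icc ((-1 : ℤ), (-1 : ℤ)) ((k:ℤ)+2, (k:ℤ)+2)).subset
    intro p hp
    obtain ⟨px, py⟩ := p
    simp only [Set.mem_setOf_eq] at hp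
    change InW k px py at hp
    simp only [Set.mem_Icc, Prod.mk_le_mk]
    unfold InW ck tk at hp
    refine ⟨⟨?_, ?_⟩, ?_, ?_⟩ <;> omega
  exact h.to_subtype



lemma facts (k : ℕ) (hk : 4 ≤ k) : (ck k : ℤ) + (tk k : ℤ) = (k:ℤ) ∧ 3 ≤ (ck k:ℤ) ∧
    1 ≤ (tk k:ℤ) ∧ (k:ℤ) - 1 ≤ 2*(tk k:ℤ)+1 ∧ 2*(tk k:ℤ)+1 ≤ (k:ℤ) ∧ (ck k:ℤ) ≤ (k:ℤ) := by
  unfold ck tk; omega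

lemma uniq_pB (k : ℕ) (hk : 4 ≤ k) : ∃! u : Wt k, (Tg k).Adj (pB k) u := by
  have hf := facts k hk
  refine ⟨⟨((ck k:ℤ), (tk k:ℤ) - 1), by unfold InW; omega⟩, adj_mk _ _ (by omega), ?_⟩
  intro y hy
  have h := adj_coords hy
  rw [pB_x, pB_y] at h
  have hy2 := y.2
  unfold InW at hy2
  refine wext (u := y) ?_ ?_
  · show y.1.1 = (ck k : ℤ)
    omega
  · show y.1.2 = (tk k : ℤ) - 1
    omega

lemma uniq_p1 (k : ℕ) (hk : 4 ≤ k) : ∃! u : Wt k, (Tg k).Adj (p1 k) u := by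
  have hf := facts k hk
  refine ⟨⟨(1, 0), by unfold InW; omega⟩, adj_mk _ _ (by omega), ?_⟩
  intro y hy
  have h := adj_coords hy
  rw [p1_x, p1_y] at h
  have hy2 := y.2
  unfold InW at hy2
  refine wext (u := y) ?_ ?_
  · show y.1.1 = (1 : ℤ)
    omega
  · show y.1.2 = (0 : ℤ)
    omega

lemma uniq_p2 (k : ℕ) (hk : 4 ≤ k) : ∃! u : Wt k, (Tg k).Adj (p2 k) u := by
  have hf := facts k hk
  refine ⟨⟨(2, 0), by unfold InW; omega⟩, adj_mk _ _ (by omega), ?_⟩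
  intro y hy
  have h := adj_coords hy
  rw [p2_x, p2_y] at h
  have hy2 := y.2
  unfold InW at hy2
  refine wext (u := y) ?_ ?_
  · show y.1.1 = (2 : ℤ)
    omega
  · show y.1.2 = (0 : ℤ)
    omega

lemma uniq_p3 (k : ℕ) (hk : 4 ≤ k) : ∃! u : Wt k, (Tg k).Adj (p3 k) u := by
  have hf := facts k hk
  refine ⟨⟨((k:ℤ), 0), by unfold InW; omega⟩, adj_mk _ _ (by omega), ?_⟩
  intro y hy
  have h := adj_coords hy
  rw [p3_x, p3_y] at h
  have hy2 := y.2
  unfold InW at hy2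
  refine wext (u := y) ?_ ?_
  · show y.1.1 = ((k:ℤ))
    omega
  · show y.1.2 = (0 : ℤ)
    omega

lemma leaf_iff (k : ℕ) (hk : 4 ≤ k) (w : Wt k) :
    (∃ v : Fin 4, fL k v = w) ↔ ∃! u : Wt k, (Tg k).Adj w u := by
  have hf := facts k hk
  constructor
  · rintro ⟨v, rfl⟩
    fin_cases v
    · exact uniq_pB k hk
    · exact uniq_p1 k hk
    · exact uniq_p2 k hk
    · exact uniq_p3 k hk
  · rintro ⟨u, hu, huni⟩
    have hw := w.2
    unfold InW at hw
    rcases hw with ⟨hy0, hx0, hx1⟩ | ⟨hx, hy⟩ | ⟨hx, hy1, hy2⟩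
    · by_cases hA : w.1.1 = 0
      · refine ⟨1, ?_⟩
        show p1 k = w
        exact wext (by rw [p1_x]; omega) (by rw [p1_y]; omega)
      · by_cases hB : w.1.1 = (k:ℤ)+1
        · refine ⟨3, ?_⟩
          show p3 k = w
          exact wext (by rw [p3_x]; omega) (by rw [p3_y]; omega)
        · exfalso
          have m1 : InW k (w.1.1 - 1) 0 := by unfold InW; omega
          have m2 : InW k (w.1.1 + 1) 0 := by unfold InW; omega
          have a1 : (Tg k).Adj w ⟨(w.1.1 - 1, 0), m1⟩ := by
            show (w.1.1 - (w.1.1 - 1)).natAbs + (w.1.2 - 0).natAbs = 1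
            omega
          have a2 : (Tg k).Adj w ⟨(w.1.1 + 1, 0), m2⟩ := by
            show (w.1.1 - (w.1.1 + 1)).natAbs + (w.1.2 - 0).natAbs = 1
            omega
          have heq : (⟨(w.1.1 - 1, 0), m1⟩ : Wt k) = ⟨(w.1.1 + 1, 0), m2⟩ :=
            (huni _ a1).trans (huni _ a2).symm
          have hcoord : w.1.1 - 1 = w.1.1 + 1 := congrArg (fun z : Wt k => z.1.1) heq
          omega
    · refine ⟨2, ?_⟩
      show p2 k = w
      exact wext (by rw [p2_x]; omega) (by rw [p2_y]; omega)
    · by_cases hA : w.1.2 = (tk k : ℤ)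
      · refine ⟨0, ?_⟩
        show pB k = w
        exact wext (by rw [pB_x]; omega) (by rw [pB_y]; omega)
      · exfalso
        have m1 : InW k w.1.1 (w.1.2 - 1) := by unfold InW; omega
        have m2 : InW k w.1.1 (w.1.2 + 1) := by unfold InW; omega
        have a1 : (Tg k).Adj w ⟨(w.1.1, w.1.2 - 1), m1⟩ := by
          show (w.1.1 - w.1.1).natAbs + (w.1.2 - (w.1.2 - 1)).natAbs = 1
          omega
        have a2 : (Tg k).Adj w ⟨(w.1.1, w.1.2 + 1), m2⟩ := by
          show (w.1.1 - w.1.1).natAbs + (w.1.2 - (w.1.2 + 1)).natAbs = 1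
          omega
        have heq : (⟨(w.1.1, w.1.2 - 1), m1⟩ : Wt k) = ⟨(w.1.1, w.1.2 + 1), m2⟩ :=
          (huni _ a1).trans (huni _ a2).symm
        have hcoord : w.1.2 - 1 = w.1.2 + 1 := congrArg (fun z : Wt k => z.1.2) heq
        omega

lemma inj (k : ℕ) (hk : 4 ≤ k) : Function.Injective (fL k) := by
  have hf := facts k hk
  intro a b hab
  have hx : (fL k a).1.1 = (fL k b).1.1 := congrArg (fun z : Wt k => z.1.1) hab
  fin_cases a <;> fin_cases b
  · rfl
  · exact absurd (show ((ck k : ℤ)) = (0:ℤ) from hx) (by omega)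
  · exact absurd (show ((ck k : ℤ)) = (2:ℤ) from hx) (by omega)
  · exact absurd (show ((ck k : ℤ)) = ((k:ℤ)+1) from hx) (by omega)
  · exact absurd (show (0:ℤ) = ((ck k : ℤ)) from hx) (by omega)
  · rfl
  · exact absurd (show (0:ℤ) = (2:ℤ) from hx) (by omega)
  · exact absurd (show (0:ℤ) = ((k:ℤ)+1) from hx) (by omega)
  · exact absurd (show (2:ℤ) = ((ck k : ℤ)) from hx) (by omega)
  · exact absurd (show (2:ℤ) = (0:ℤ) from hx) (by omega)
  · rfl
  · exact absurd (show (2:ℤ) = ((k:ℤ)+1) from hx) (by omega)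
  · exact absurd (show ((k:ℤ)+1) = ((ck k : ℤ)) from hx) (by omega)
  · exact absurd (show ((k:ℤ)+1) = (0:ℤ) from hx) (by omega)
  · exact absurd (show ((k:ℤ)+1) = (2:ℤ) from hx) (by omega)
  · rfl

lemma m_c0 (k : ℕ) (hk : 4 ≤ k) : InW k (ck k) 0 := by
  have hf := facts k hk; unfold InW; omega
lemma m_20 (k : ℕ) (hk : 4 ≤ k) : InW k 2 0 := by
  have hf := facts k hk; unfold InW; omega

def qc (k : ℕ) (hk : 4 ≤ k) : Wt k := ⟨((ck k : ℤ), 0), m_c0 k hk⟩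
def q2 (k : ℕ) (hk : 4 ≤ k) : Wt k := ⟨(2, 0), m_20 k hk⟩

lemma dBqc (k : ℕ) (hk : 4 ≤ k) : (Tg k).dist (pB k) (qc k hk) ≤ tk k := by
  have hf := facts k hk
  have h := distvert k (by omega) (tk k) 0 (tk k) (m_c0 k hk) (pB k).2 le_rfl (by omega) (by omega)
  have e : (Tg k).dist (qc k hk) (pB k) = (Tg k).dist (pB k) (qc k hk) :=
    SimpleGraph.dist_comm
  exact le_trans (le_of_eq e.symm) h

lemma dq2p2 (k : ℕ) (hk : 4 ≤ k) : (Tg k).dist (q2 k hk) (p2 k) = 1 :=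
  SimpleGraph.dist_eq_one_iff_adj.mpr (adj_mk _ _ (by omega))

lemma ub01 (k : ℕ) (hk : 4 ≤ k) : (Tg k).dist (pB k) (p1 k) ≤ k := by
  have hf := facts k hk
  have h1 := dBqc k hk
  have h2 : (Tg k).dist (p1 k) (qc k hk) ≤ ck k :=
    distspine k (by omega) (ck k) 0 (ck k) (p1 k).2 (m_c0 k hk) (by omega) (by omega)
  have htr := (conn k (by omega)).dist_triangle (u := pB k) (v := qc k hk) (w := p1 k)
  have e : (Tg k).dist (qc k hk) (p1 k) = (Tg k).dist (p1 k) (qc k hk) :=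
    SimpleGraph.dist_comm
  have hck : ck k + tk k = k := by unfold ck tk; omega
  omega

lemma ub02 (k : ℕ) (hk : 4 ≤ k) : (Tg k).dist (pB k) (p2 k) ≤ k - 1 := by
  have hf := facts k hk
  have h1 := dBqc k hk
  have h2 : (Tg k).dist (q2 k hk) (qc k hk) ≤ ck k - 2 :=
    distspine k (by omega) (ck k - 2) 2 (ck k) (m_20 k hk) (m_c0 k hk) (by omega) (by omega)
  have h3 := dq2p2 k hk
  have htr1 := (conn k (by omega)).dist_triangle (u := pB k) (v := qc k hk) (w := p2 k)
  have htr2 := (conn k (by omega)).dist_triangle (u := qc k hk) (v := q2 k hk) (w := p2 k)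
  have e : (Tg k).dist (qc k hk) (q2 k hk) = (Tg k).dist (q2 k hk) (qc k hk) :=
    SimpleGraph.dist_comm
  have hck : ck k + tk k = k ∧ 3 ≤ ck k ∧ 1 ≤ tk k := by unfold ck tk; omega
  omega

lemma ub03 (k : ℕ) (hk : 4 ≤ k) : (Tg k).dist (pB k) (p3 k) ≤ 2 * tk k + 1 := by
  have hf := facts k hk
  have h1 := dBqc k hk
  have h2 : (Tg k).dist (qc k hk) (p3 k) ≤ tk k + 1 :=
    distspine k (by omega) (tk k + 1) (ck k) ((k:ℤ)+1) (m_c0 k hk) (p3 k).2 (by omega) (by omega)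
  have htr := (conn k (by omega)).dist_triangle (u := pB k) (v := qc k hk) (w := p3 k)
  omega

lemma ub12 (k : ℕ) (hk : 4 ≤ k) : (Tg k).dist (p1 k) (p2 k) ≤ 3 := by
  have hf := facts k hk
  have h1 : (Tg k).dist (p1 k) (q2 k hk) ≤ 2 :=
    distspine k (by omega) 2 0 2 (p1 k).2 (m_20 k hk) (by omega) (by omega)
  have h2 := dq2p2 k hk
  have htr := (conn k (by omega)).dist_triangle (u := p1 k) (v := q2 k hk) (w := p2 k)
  omega

lemma ub23 (k : ℕ) (hk : 4 ≤ k) : (Tg k).dist (p2 k) (p3 k) ≤ k := by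
  have hf := facts k hk
  have h1 : (Tg k).dist (q2 k hk) (p3 k) ≤ k - 1 :=
    distspine k (by omega) (k - 1) 2 ((k:ℤ)+1) (m_20 k hk) (p3 k).2 (by omega) (by omega)
  have h2 := dq2p2 k hk
  have e : (Tg k).dist (q2 k hk) (p2 k) = (Tg k).dist (p2 k) (q2 k hk) :=
    SimpleGraph.dist_comm
  have htr := (conn k (by omega)).dist_triangle (u := p2 k) (v := q2 k hk) (w := p3 k)
  omega

lemma lip1 (k : ℕ) : ∀ x y : Wt k, (Tg k).Adj x y → (x.1.1 + x.1.2) - (y.1.1 + y.1.2) ≤ 1 := by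
  intro x y hxy
  have := adj_coords hxy
  omega

lemma lip2 (k : ℕ) : ∀ x y : Wt k, (Tg k).Adj x y → (x.1.1 - x.1.2) - (y.1.1 - y.1.2) ≤ 1 := by
  intro x y hxy
  have := adj_coords hxy
  omega

lemma lip3 (k : ℕ) : ∀ x y : Wt k, (Tg k).Adj x y → x.1.1 - y.1.1 ≤ 1 := by
  intro x y hxy
  have := adj_coords hxy
  omega

lemma lb13 (k : ℕ) (hk : 4 ≤ k) : (k:ℤ) + 1 ≤ ((Tg k).dist (p1 k) (p3 k) : ℤ) := by
  have h := dist_lb (k := k) (by omega) (fun w => w.1.1) (lip3 k) (p3 k) (p1 k)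
  simp only [p3_x, p1_x] at h
  have e : (Tg k).dist (p3 k) (p1 k) = (Tg k).dist (p1 k) (p3 k) := SimpleGraph.dist_comm
  omega

lemma lb01 (k : ℕ) (hk : 4 ≤ k) : (k:ℤ) ≤ ((Tg k).dist (pB k) (p1 k) : ℤ) := by
  have hf := facts k hk
  have h := dist_lb (k := k) (by omega) (fun w => w.1.1 + w.1.2) (lip1 k) (pB k) (p1 k)
  simp only [pB_x, pB_y, p1_x, p1_y] at h
  omega

lemma lb02 (k : ℕ) (hk : 4 ≤ k) : (k:ℤ) - 1 ≤ ((Tg k).dist (pB k) (p2 k) : ℤ) := by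
  have hf := facts k hk
  have h := dist_lb (k := k) (by omega) (fun w => w.1.1 + w.1.2) (lip1 k) (pB k) (p2 k)
  simp only [pB_x, pB_y, p2_x, p2_y] at h
  omega

lemma lb03 (k : ℕ) (hk : 4 ≤ k) : (k:ℤ) - 1 ≤ ((Tg k).dist (pB k) (p3 k) : ℤ) := by
  have hf := facts k hk
  have h := dist_lb (k := k) (by omega) (fun w => w.1.1 - w.1.2) (lip2 k) (p3 k) (pB k)
  simp only [pB_x, pB_y, p3_x, p3_y] at h
  have e : (Tg k).dist (p3 k) (pB k) = (Tg k).dist (pB k) (p3 k) := SimpleGraph.dist_comm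
  omega

lemma e02 (k : ℕ) (hk : 4 ≤ k) : (Tg k).dist (pB k) (p2 k) = k - 1 := by
  have h1 := ub02 k hk
  have h2 := lb02 k hk
  omega

lemma adj_iff (k : ℕ) (hk : 4 ≤ k) : ∀ u v : Fin 4, u ≠ v →
    (diamond.Adj u v ↔ (Tg k).dist (fL k u) (fL k v) ≤ k) := by
  intro u v huv
  fin_cases u <;> fin_cases v
  · exact absurd rfl huv
  · refine iff_of_true ?_ ?_
    · simp only [diamond, SimpleGraph.fromRel_adj]
      decide
    · show (Tg k).dist (pB k) (p1 k) ≤ k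
      have h := ub01 k hk
      have hf := facts k hk
      omega
  · refine iff_of_true ?_ ?_
    · simp only [diamond, SimpleGraph.fromRel_adj]
      decide
    · show (Tg k).dist (pB k) (p2 k) ≤ k
      have h := ub02 k hk
      have hf := facts k hk
      omega
  · refine iff_of_true ?_ ?_
    · simp only [diamond, SimpleGraph.fromRel_adj]
      decide
    · show (Tg k).dist (pB k) (p3 k) ≤ k
      have h := ub03 k hk
      have hf := facts k hk
      omega
  · refine iff_of_true ?_ ?_
    · simp only [diamond, SimpleGraph.fromRel_adj]
      decide
    · show (Tg k).dist (p1 k) (pB k) ≤ k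
      have h := ub01 k hk
      have hf := facts k hk
      have e : (Tg k).dist (p1 k) (pB k) = (Tg k).dist (pB k) (p1 k) := SimpleGraph.dist_comm
      omega
  · exact absurd rfl huv
  · refine iff_of_true ?_ ?_
    · simp only [diamond, SimpleGraph.fromRel_adj]
      decide
    · show (Tg k).dist (p1 k) (p2 k) ≤ k
      have h := ub12 k hk
      have hf := facts k hk
      omega
  · refine iff_of_false ?_ ?_
    · simp only [diamond, SimpleGraph.fromRel_adj]
      decide
    · show ¬((Tg k).dist (p1 k) (p3 k) ≤ k)
      intro hle
      have h := lb13 k hk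
      omega
  · refine iff_of_true ?_ ?_
    · simp only [diamond, SimpleGraph.fromRel_adj]
      decide
    · show (Tg k).dist (p2 k) (pB k) ≤ k
      have h := ub02 k hk
      have hf := facts k hk
      have e : (Tg k).dist (p2 k) (pB k) = (Tg k).dist (pB k) (p2 k) := SimpleGraph.dist_comm
      omega
  · refine iff_of_true ?_ ?_
    · simp only [diamond, SimpleGraph.fromRel_adj]
      decide
    · show (Tg k).dist (p2 k) (p1 k) ≤ k
      have h := ub12 k hk
      have hf := facts k hk
      have e : (Tg k).dist (p2 k) (p1 k) = (Tg k).dist (p1 k) (p2 k) := SimpleGraph.dist_comm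
      omega
  · exact absurd rfl huv
  · refine iff_of_true ?_ ?_
    · simp only [diamond, SimpleGraph.fromRel_adj]
      decide
    · show (Tg k).dist (p2 k) (p3 k) ≤ k
      have h := ub23 k hk
      have hf := facts k hk
      omega
  · refine iff_of_true ?_ ?_
    · simp only [diamond, SimpleGraph.fromRel_adj]
      decide
    · show (Tg k).dist (p3 k) (pB k) ≤ k
      have h := ub03 k hk
      have hf := facts k hk
      have e : (Tg k).dist (p3 k) (pB k) = (Tg k).dist (pB k) (p3 k) := SimpleGraph.dist_comm
      omega
  · refine iff_of_false ?_ ?_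
    · simp only [diamond, SimpleGraph.fromRel_adj]
      decide
    · show ¬((Tg k).dist (p3 k) (p1 k) ≤ k)
      intro hle
      have h := lb13 k hk
      have e : (Tg k).dist (p3 k) (p1 k) = (Tg k).dist (p1 k) (p3 k) := SimpleGraph.dist_comm
      omega
  · refine iff_of_true ?_ ?_
    · simp only [diamond, SimpleGraph.fromRel_adj]
      decide
    · show (Tg k).dist (p3 k) (p2 k) ≤ k
      have h := ub23 k hk
      have hf := facts k hk
      have e : (Tg k).dist (p3 k) (p2 k) = (Tg k).dist (p2 k) (p3 k) := SimpleGraph.dist_comm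
      omega
  · exact absurd rfl huv

end DLR

namespace DLR

lemma mval_eq (k : ℕ) (hk : 4 ≤ k) : mval (Tg k) (fL k) 0 = k - 1 := by
  have hf := facts k hk
  have he02 : (Tg k).dist (p2 k) (pB k) = k - 1 := by
    have h := e02 k hk
    have e : (Tg k).dist (p2 k) (pB k) = (Tg k).dist (pB k) (p2 k) := SimpleGraph.dist_comm
    omega
  unfold mval
  apply le_antisymm
  · apply Nat.sInf_le
    show ∃ u, u ≠ (0 : Fin 4) ∧ (Tg k).dist (fL k u) (fL k 0) = k - 1
    exact ⟨2, by decide, he02⟩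
  · refine le_csInf ⟨(Tg k).dist (fL k 2) (fL k 0), ?_⟩ ?_
    · show ∃ u, u ≠ (0 : Fin 4) ∧ (Tg k).dist (fL k u) (fL k 0) = (Tg k).dist (fL k 2) (fL k 0)
      exact ⟨2, by decide, rfl⟩
    rintro b ⟨u, hu, hd⟩
    fin_cases u
    · exact absurd rfl hu
    · have hd' : (Tg k).dist (p1 k) (pB k) = b := hd
      have h := lb01 k hk
      have e : (Tg k).dist (p1 k) (pB k) = (Tg k).dist (pB k) (p1 k) := SimpleGraph.dist_comm
      omega
    · have hd' : (Tg k).dist (p2 k) (pB k) = b := hd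
      omega
    · have hd' : (Tg k).dist (p3 k) (pB k) = b := hd
      have h := lb03 k hk
      have e : (Tg k).dist (p3 k) (pB k) = (Tg k).dist (pB k) (p3 k) := SimpleGraph.dist_comm
      omega

end DLR

open DLR in
theorem diamond_leaf_root_exists (k : ℕ) (hk : 4 ≤ k) :
    ∃ (W : Type) (T : SimpleGraph W) (f : Fin 4 → W),
      IsLeafRoot diamond k T f ∧ mval T f 0 = k - 1 := by
  refine ⟨Wt k, Tg k, fL k, ⟨finW k, ⟨conn k (by omega), acyclic k hk⟩,
    inj k hk, fun w => leaf_iff k hk w, adj_iff k hk⟩, mval_eq k hk⟩
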